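/- Let D be a division ring that is an associative unital algebra over the complex numbers ℂ, and suppose the underlying ℂ-vector space of D has countable dimension. Then the structure map ℂ → D is surjective; that is, D = ℂ. -/

import Mathlib

open Polynomial in
/-- Adaptation of `Transcendental.linearIndependent_sub_inv` to a division ring codomain. -/
theorem aux_linearIndependent_sub_inv
    {F E : Type*} [Field F] [DivisionRing E] [Algebra F E] {x : E} (H : Transcendental F x) :
    LinearIndependent F fun a ↦ (x - algebraMap F E a)⁻¹ := by
  classical
  rw [transcendental_iff] at H
  set A := Algebra.adjoin F ({x} : Set E) with hA
  letI : CommRing A := Algebra.adjoinCommRingOfComm F (by rintro a rfl b rfl; rfl)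
  set y : A := ⟨x, Algebra.self_mem_adjoin_singleton F x⟩ with hy
  have hcoe : ∀ p : F[X], (aeval y p : E) = aeval x p := by
    intro p
    have := Polynomial.aeval_algHom_apply A.val y p
    simpa using this.symm
  refine linearIndependent_iff'.2 fun s m hm i hi ↦ ?_
  have hnz (a : F) : x - algebraMap F E a ≠ 0 := fun h ↦
    X_sub_C_ne_zero a <| H (X - C a) (by simp [h])
  set b : A := s.prod fun j ↦ y - algebraMap F A j with hb
  have hyc : ∀ j : F, ((y - algebraMap F A j : A) : E) = x - algebraMap F E j := by
    intro j; rfl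
  have h1 : ∀ i ∈ s, m i • ((b : E) * (x - algebraMap F E i)⁻¹) =
      m i • (((s.erase i).prod fun j ↦ y - algebraMap F A j : A) : E) := fun i hi ↦ by
    have : b = ((s.erase i).prod fun j ↦ y - algebraMap F A j) * (y - algebraMap F A i) := by
      rw [hb, s.prod_erase_mul _ hi]
    rw [this]
    push_cast
    rw [mul_assoc, mul_inv_cancel₀ (hnz i), mul_one]
  replace hm := congr((b : E) * $(hm))
  simp_rw [mul_zero, Finset.mul_sum, mul_smul_comm, Finset.sum_congr rfl h1] at hm
  let p : Polynomial F := s.sum fun i ↦ .C (m i) * (s.erase i).prod fun j ↦ .X - .C j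
  have hap : aeval x p = 0 := by
    rw [← hcoe]
    have : aeval y p = s.sum fun i ↦ m i • (s.erase i).prod fun j ↦ y - algebraMap F A j := by
      simp_rw [p, map_sum, map_mul, map_prod, map_sub, aeval_X, aeval_C, Algebra.smul_def]
    rw [this]
    push_cast
    simpa using hm
  replace hm := congr(Polynomial.aeval i $(H p hap))
  have h2 : ∀ j ∈ s.erase i, m j * ((s.erase j).prod fun x ↦ i - x) = 0 := fun j hj ↦ by
    have := Finset.mem_erase_of_ne_of_mem (Finset.ne_of_mem_erase hj).symm hi
    simp_rw [← (s.erase j).prod_erase_mul _ this, sub_self, mul_zero]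
  simp_rw [map_zero, p, map_sum, map_mul, map_prod, map_sub, aeval_X,
    aeval_C, Algebra.algebraMap_self_apply, ← s.sum_erase_add _ hi,
    Finset.sum_eq_zero h2, zero_add] at hm
  exact eq_zero_of_ne_zero_of_mul_right_eq_zero (Finset.prod_ne_zero_iff.2 fun j hj ↦
    sub_ne_zero.2 (Finset.ne_of_mem_erase hj).symm) hm

/-- A division algebra over `ℂ` of countable dimension is `ℂ` itself. -/
theorem countable_dim_division_algebra_eq_complex (D : Type*) [DivisionRing D]
    [Algebra ℂ D] (hD : Module.rank ℂ D ≤ Cardinal.aleph0) :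
    Function.Surjective (algebraMap ℂ D) := by
  have hint : Algebra.IsIntegral ℂ D := by
    constructor
    intro x
    by_contra hx
    have htr : Transcendental ℂ x := fun h ↦ hx h.isIntegral
    have hli := aux_linearIndependent_sub_inv htr
    have hcard := hli.cardinal_lift_le_rank.trans (Cardinal.lift_le.2 hD)
    rw [Cardinal.mk_complex, Cardinal.lift_continuum, Cardinal.lift_aleph0] at hcard
    exact absurd hcard (not_le.2 Cardinal.aleph0_lt_continuum)
  exact IsAlgClosed.algebraMap_bijective_of_isIntegral.2
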